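/- Let F_q be a finite field of odd characteristic p with q = p^n elements. If q ≡ 1 (mod 8) or q ≡ 3 (mod 8), then the unit group U(F_q[QD_16]) of the group algebra F_q[QD_16] is isomorphic to C_{q-1}^4 × GL(2,F_q)^3, the direct product of four copies of the cyclic group of order q - 1 and three copies of the general linear group GL(2,F_q). -/

import Mathlib

/-- Relations for the quasidihedral group `QD_{2^k}`:
`a^(2^(k-1)) = 1`, `x^2 = 1`, `x * a * x = a^(2^(k-2)-1)`. -/
def qdRels (k : ℕ) : Set (FreeGroup (Fin 2)) :=
  {FreeGroup.of 0 ^ (2 ^ (k - 1)), FreeGroup.of 1 ^ 2,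
    FreeGroup.of 1 * FreeGroup.of 0 * FreeGroup.of 1 * (FreeGroup.of 0 ^ (2 ^ (k - 2) - 1))⁻¹}

/-- The quasidihedral group of order 16: `⟨a, x | a^8 = x^2 = 1, x a x = a^3⟩`. -/
def QD16 : Type := PresentedGroup (qdRels 4)

instance : Group QD16 := inferInstanceAs (Group (PresentedGroup (qdRels 4)))


namespace QDAux

@[ext] structure QD where
  i : ZMod 8
  j : ZMod 2
deriving DecidableEq, Fintype

instance : Mul QD := ⟨fun g h => ⟨g.i + 3 ^ g.j.val * h.i, g.j + h.j⟩⟩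
instance : One QD := ⟨⟨0, 0⟩⟩
instance : Inv QD := ⟨fun g => ⟨-(3 ^ g.j.val * g.i), g.j⟩⟩

set_option maxHeartbeats 4000000 in
instance : Group QD where
  mul_assoc := by decide
  one_mul := by decide
  mul_one := by decide
  inv_mul_cancel := by decide

theorem card_QD : Fintype.card QD = 16 := by decide

section homOf

variable {M : Type*} [Monoid M] {A X : M}

theorem pow_emod {a : M} {n : ℕ} (h : a ^ n = 1) (m : ℕ) : a ^ m = a ^ (m % n) := by
  conv_lhs => rw [← Nat.div_add_mod m n]
  rw [pow_add, pow_mul, h, one_pow, one_mul]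

theorem pow_val_add8 (hA : A ^ 8 = 1) (u v : ZMod 8) :
    A ^ (u + v).val = A ^ u.val * A ^ v.val := by
  rw [ZMod.val_add, ← pow_emod hA, pow_add]

theorem pow_val_add2 (hX : X ^ 2 = 1) (u v : ZMod 2) :
    X ^ (u + v).val = X ^ u.val * X ^ v.val := by
  rw [ZMod.val_add, ← pow_emod hX, pow_add]

theorem pow_val_mul3 (hA : A ^ 8 = 1) (v : ZMod 8) :
    A ^ ((3 * v : ZMod 8)).val = A ^ (3 * v.val) := by
  have h3 : (3 : ZMod 8).val = 3 := rfl
  rw [ZMod.val_mul, h3, ← pow_emod hA]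

theorem X_mul_pow_A (hXA : X * A = A ^ 3 * X) : ∀ k : ℕ, X * A ^ k = A ^ (3 * k) * X
  | 0 => by simp
  | (k + 1) => by
      rw [pow_succ, ← mul_assoc, X_mul_pow_A hXA k, mul_assoc, hXA,
        show 3 * (k + 1) = 3 * k + 3 from by ring, pow_add, mul_assoc]

/-- The monoid hom from `QD` determined by elements `A`, `X` satisfying the relations. -/
def homOf (hA : A ^ 8 = 1) (hX : X ^ 2 = 1) (hXA : X * A = A ^ 3 * X) : QD →* M where
  toFun g := A ^ g.i.val * X ^ g.j.val
  map_one' := by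
    show A ^ (0 : ZMod 8).val * X ^ (0 : ZMod 2).val = 1
    simp
  map_mul' g h := by
    obtain ⟨gi, gj⟩ := g
    obtain ⟨hi, hj⟩ := h
    show A ^ (gi + 3 ^ gj.val * hi).val * X ^ (gj + hj).val
        = (A ^ gi.val * X ^ gj.val) * (A ^ hi.val * X ^ hj.val)
    have hlt : gj.val < 2 := ZMod.val_lt gj
    have hgj : gj.val = 0 ∨ gj.val = 1 := by omega
    rcases hgj with h | h <;> rw [h]
    · rw [pow_zero, one_mul, pow_val_add8 hA, pow_val_add2 hX, h, pow_zero, one_mul]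
      simp [mul_assoc]
    · rw [pow_one, pow_one, pow_val_add8 hA, pow_val_mul3 hA, pow_val_add2 hX, h, pow_one,
        mul_assoc, mul_assoc]
      congr 1
      rw [← mul_assoc, ← X_mul_pow_A hXA, mul_assoc]

@[simp] theorem homOf_apply (hA : A ^ 8 = 1) (hX : X ^ 2 = 1) (hXA : X * A = A ^ 3 * X) (g : QD) :
    homOf hA hX hXA g = A ^ g.i.val * X ^ g.j.val := rfl

end homOf

end QDAux


namespace QDAux

/-- the generator `a` of `QD16` -/
def aa : QD16 := PresentedGroup.of (rels := qdRels 4) 0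

/-- the generator `x` of `QD16` -/
def xx : QD16 := PresentedGroup.of (rels := qdRels 4) 1

theorem rel_eq_one {r : FreeGroup (Fin 2)} (hr : r ∈ qdRels 4) :
    (PresentedGroup.mk (qdRels 4) r : QD16) = 1 :=
  (QuotientGroup.eq_one_iff _).mpr (Subgroup.subset_normalClosure hr)

theorem aa_pow_eight : aa ^ 8 = 1 := by
  have h := rel_eq_one (r := FreeGroup.of 0 ^ (2 ^ (4 - 1))) (by left; rfl)
  rw [map_pow] at h
  simp at h; exact h

theorem xx_sq : xx ^ 2 = 1 := by
  have h := rel_eq_one (r := FreeGroup.of 1 ^ 2) (by right; left; rfl)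
  rw [map_pow] at h
  exact h

theorem xx_aa_xx : xx * aa * xx = aa ^ 3 := by
  have h := rel_eq_one
    (r := FreeGroup.of 1 * FreeGroup.of 0 * FreeGroup.of 1 * (FreeGroup.of 0 ^ (2 ^ (4 - 2) - 1))⁻¹)
    (by right; right; rfl)
  rw [map_mul, map_mul, map_mul, map_inv, map_pow] at h
  have h' : (xx * aa * xx) * (aa ^ 3)⁻¹ = 1 := by simp at h; exact h
  calc xx * aa * xx = (xx * aa * xx) * (aa ^ 3)⁻¹ * aa ^ 3 := by group
  _ = aa ^ 3 := by rw [h']; group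

theorem xx_mul_aa : xx * aa = aa ^ 3 * xx := by
  have hx := xx_sq
  have h := xx_aa_xx
  calc xx * aa = (xx * aa * xx) * xx := by
        rw [mul_assoc, mul_assoc, ← pow_two, hx, mul_one]
  _ = aa ^ 3 * xx := by rw [h]

/-- map to the concrete group -/
def fQD : QD16 →* QD :=
  PresentedGroup.toGroup (f := ![(⟨1, 0⟩ : QD), ⟨0, 1⟩]) (by
    intro r hr
    rcases hr with h | h | h <;> subst h <;>
      simp only [map_pow, map_mul, map_inv, FreeGroup.lift_apply_of] <;> decide)

/-- map from the concrete group -/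
def gQD : QD →* QD16 := homOf aa_pow_eight xx_sq xx_mul_aa

theorem gQD_fQD : ∀ z : QD16, gQD (fQD z) = z := by
  have h : (gQD.comp fQD) = MonoidHom.id QD16 := by
    apply PresentedGroup.ext
    intro i
    fin_cases i <;>
      simp only [MonoidHom.comp_apply, MonoidHom.id_apply, fQD, PresentedGroup.toGroup.of] <;>
      · show gQD _ = _
        simp [gQD, homOf_apply]
        rfl
  intro z
  exact DFunLike.congr_fun h z

set_option maxHeartbeats 1000000 in
theorem pow_formula : ∀ q : QD, (⟨1, 0⟩ : QD) ^ q.i.val * (⟨0, 1⟩ : QD) ^ q.j.val = q := by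
  decide

theorem fQD_gQD : ∀ q : QD, fQD (gQD q) = q := by
  intro q
  have ha : fQD aa = (⟨1, 0⟩ : QD) := rfl
  have hx : fQD xx = (⟨0, 1⟩ : QD) := rfl
  rw [gQD, homOf_apply, map_mul, map_pow, map_pow, ha, hx, pow_formula]

/-- `QD16` is isomorphic to the concrete group `QD`. -/
def eQD : QD16 ≃* QD where
  toFun := fQD
  invFun := gQD
  left_inv := gQD_fQD
  right_inv := fQD_gQD
  map_mul' := map_mul fQD

section Reps
variable {F : Type} [Field F]

theorem sq_pow8 {u : F} (hu : u ^ 2 = 1) : u ^ 8 = 1 := by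
  rw [show (8 : ℕ) = 2 * 4 from rfl, pow_mul, hu, one_pow]

theorem scalar_comm {u v : F} (hu : u ^ 2 = 1) : v * u = u ^ 3 * v := by
  rw [pow_succ, hu, one_mul, mul_comm]

/-- 2-dim rep matrices -/
def Aq (s : F) : Matrix (Fin 2) (Fin 2) F := !![0, 1; 1, s]
def Xq (s : F) : Matrix (Fin 2) (Fin 2) F := !![1, 0; s, -1]
def A5 : Matrix (Fin 2) (Fin 2) F := !![0, -1; 1, 0]
def X5 : Matrix (Fin 2) (Fin 2) F := !![1, 0; 0, -1]

variable (s : F)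

theorem Aq_sq (hs : s ^ 2 = -2) : (Aq s) ^ 2 = !![1, s; s, -1] := by
  rw [pow_two, Aq, Matrix.mul_fin_two]
  ext i j
  fin_cases i <;> fin_cases j <;> simp <;> linear_combination hs

theorem Aq_cube (hs : s ^ 2 = -2) : (Aq s) ^ 3 = !![s, -1; -1, 0] := by
  rw [pow_succ, Aq_sq s hs, Aq, Matrix.mul_fin_two]
  ext i j
  fin_cases i <;> fin_cases j <;> simp <;> linear_combination hs

theorem Aq_four (hs : s ^ 2 = -2) : (Aq s) ^ 4 = -1 := by
  rw [show (4 : ℕ) = 2 * 2 from rfl, pow_mul, Aq_sq s hs, pow_two, Matrix.mul_fin_two,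
    Matrix.one_fin_two]
  ext i j
  fin_cases i <;> fin_cases j <;> simp <;> linear_combination hs

theorem Aq_five (hs : s ^ 2 = -2) : (Aq s) ^ 5 = -Aq s := by
  rw [pow_succ, Aq_four s hs, neg_one_mul]

theorem Aq_six (hs : s ^ 2 = -2) : (Aq s) ^ 6 = -(Aq s ^ 2) := by
  rw [show (6 : ℕ) = 4 + 2 from rfl, pow_add, Aq_four s hs, neg_one_mul]

theorem Aq_seven (hs : s ^ 2 = -2) : (Aq s) ^ 7 = -(Aq s ^ 3) := by
  rw [show (7 : ℕ) = 4 + 3 from rfl, pow_add, Aq_four s hs, neg_one_mul]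

theorem Aq_pow8 (hs : s ^ 2 = -2) : (Aq s) ^ 8 = 1 := by
  rw [show (8 : ℕ) = 4 * 2 from rfl, pow_mul, Aq_four s hs, neg_one_sq]

theorem Xq_sq : (Xq s) ^ 2 = 1 := by
  rw [pow_two, Xq, Matrix.mul_fin_two, Matrix.one_fin_two]
  ext i j
  fin_cases i <;> fin_cases j <;> simp

theorem Xq_mul_Aq (hs : s ^ 2 = -2) : Xq s * Aq s = (Aq s) ^ 3 * Xq s := by
  rw [Aq_cube s hs]
  ext i j
  fin_cases i <;> fin_cases j <;>
    simp [Xq, Aq, Matrix.mul_apply, Fin.sum_univ_two] <;> linear_combination hs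

theorem A5_sq : (A5 : Matrix (Fin 2) (Fin 2) F) ^ 2 = -1 := by
  rw [pow_two, A5, Matrix.mul_fin_two, Matrix.one_fin_two]
  ext i j
  fin_cases i <;> fin_cases j <;> simp

theorem A5_cube : (A5 : Matrix (Fin 2) (Fin 2) F) ^ 3 = -A5 := by
  rw [pow_succ, A5_sq, neg_one_mul]

theorem A5_four : (A5 : Matrix (Fin 2) (Fin 2) F) ^ 4 = 1 := by
  rw [show (4 : ℕ) = 2 * 2 from rfl, pow_mul, A5_sq, neg_one_sq]

theorem A5_pow8 : (A5 : Matrix (Fin 2) (Fin 2) F) ^ 8 = 1 := by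
  rw [show (8 : ℕ) = 4 * 2 from rfl, pow_mul, A5_four, one_pow]

theorem A5_five : (A5 : Matrix (Fin 2) (Fin 2) F) ^ 5 = A5 := by
  rw [pow_succ, A5_four, one_mul]

theorem A5_six : (A5 : Matrix (Fin 2) (Fin 2) F) ^ 6 = -1 := by
  rw [show (6 : ℕ) = 4 + 2 from rfl, pow_add, A5_four, one_mul, A5_sq]

theorem A5_seven : (A5 : Matrix (Fin 2) (Fin 2) F) ^ 7 = -A5 := by
  rw [show (7 : ℕ) = 4 + 3 from rfl, pow_add, A5_four, one_mul, A5_cube]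

theorem X5_sq : (X5 : Matrix (Fin 2) (Fin 2) F) ^ 2 = 1 := by
  rw [pow_two, X5, Matrix.mul_fin_two, Matrix.one_fin_two]
  ext i j
  fin_cases i <;> fin_cases j <;> simp

theorem X5_mul_A5 : (X5 : Matrix (Fin 2) (Fin 2) F) * A5 = A5 ^ 3 * X5 := by
  rw [A5_cube]
  ext i j
  fin_cases i <;> fin_cases j <;> simp [X5, A5, Matrix.mul_apply, Fin.sum_univ_two]

end Reps

section RepDefs
variable {F : Type} [Field F]

theorem one_sq' : (1 : F) ^ 2 = 1 := one_pow 2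
theorem neg_one_sq' : (-1 : F) ^ 2 = 1 := neg_one_sq
theorem neg_s_sq {s : F} (hs : s ^ 2 = -2) : (-s) ^ 2 = -2 := by rw [neg_sq, hs]

/-- one-dimensional representations -/
def scalarRep (u v : F) (hu : u ^ 2 = 1) (hv : v ^ 2 = 1) : QD →* F :=
  homOf (sq_pow8 hu) hv (scalar_comm hu)

@[simp] theorem scalarRep_apply (u v : F) (hu : u ^ 2 = 1) (hv : v ^ 2 = 1) (g : QD) :
    scalarRep u v hu hv g = u ^ g.i.val * v ^ g.j.val := rfl

/-- the two-dimensional representation with `a` of order 4 -/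
def rep5 : QD →* Matrix (Fin 2) (Fin 2) F :=
  homOf A5_pow8 X5_sq X5_mul_A5

/-- the faithful two-dimensional representations -/
def repS (s : F) (hs : s ^ 2 = -2) : QD →* Matrix (Fin 2) (Fin 2) F :=
  homOf (Aq_pow8 s hs) (Xq_sq s) (Xq_mul_Aq s hs)

variable (s : F)

theorem Aq_one : Aq s ^ 1 = !![0, 1; 1, s] := by rw [pow_one, Aq]
theorem Xq_one : Xq s ^ 1 = !![1, 0; s, -1] := by rw [pow_one, Xq]
theorem Aq_five' (hs : s ^ 2 = -2) : Aq s ^ 5 = !![0, -1; -1, -s] := by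
  rw [Aq_five s hs, Aq]; ext i j; fin_cases i <;> fin_cases j <;> simp
theorem Aq_six' (hs : s ^ 2 = -2) : Aq s ^ 6 = !![-1, -s; -s, 1] := by
  rw [Aq_six s hs, Aq_sq s hs]; ext i j; fin_cases i <;> fin_cases j <;> simp
theorem Aq_seven' (hs : s ^ 2 = -2) : Aq s ^ 7 = !![-s, 1; 1, 0] := by
  rw [Aq_seven s hs, Aq_cube s hs]; ext i j; fin_cases i <;> fin_cases j <;> simp
theorem Aq_four' (hs : s ^ 2 = -2) : Aq s ^ 4 = !![-1, 0; 0, -1] := by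
  rw [Aq_four s hs, Matrix.one_fin_two]; ext i j; fin_cases i <;> fin_cases j <;> simp
theorem A5_one : (A5 : Matrix (Fin 2) (Fin 2) F) ^ 1 = !![0, -1; 1, 0] := by rw [pow_one, A5]
theorem X5_one : (X5 : Matrix (Fin 2) (Fin 2) F) ^ 1 = !![1, 0; 0, -1] := by rw [pow_one, X5]
theorem A5_sq' : (A5 : Matrix (Fin 2) (Fin 2) F) ^ 2 = !![-1, 0; 0, -1] := by
  rw [A5_sq, Matrix.one_fin_two]; ext i j; fin_cases i <;> fin_cases j <;> simp
theorem A5_cube' : (A5 : Matrix (Fin 2) (Fin 2) F) ^ 3 = !![0, 1; -1, 0] := by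
  rw [A5_cube, A5]; ext i j; fin_cases i <;> fin_cases j <;> simp
theorem A5_four' : (A5 : Matrix (Fin 2) (Fin 2) F) ^ 4 = !![1, 0; 0, 1] := by
  rw [A5_four, Matrix.one_fin_two]
theorem A5_five' : (A5 : Matrix (Fin 2) (Fin 2) F) ^ 5 = !![0, -1; 1, 0] := by
  rw [A5_five, A5]
theorem A5_six' : (A5 : Matrix (Fin 2) (Fin 2) F) ^ 6 = !![-1, 0; 0, -1] := by
  rw [A5_six, Matrix.one_fin_two]; ext i j; fin_cases i <;> fin_cases j <;> simp
theorem A5_seven' : (A5 : Matrix (Fin 2) (Fin 2) F) ^ 7 = !![0, 1; -1, 0] := by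
  rw [A5_seven, A5]; ext i j; fin_cases i <;> fin_cases j <;> simp

theorem orth (hs : s ^ 2 = -2) (k : QD) :
    scalarRep 1 1 one_sq' one_sq' k + scalarRep 1 (-1) one_sq' neg_one_sq' k
      + scalarRep (-1) 1 neg_one_sq' one_sq' k + scalarRep (-1) (-1) neg_one_sq' neg_one_sq' k
      + 2 * (rep5 k).trace + 2 * ((repS s hs) k).trace + 2 * ((repS (-s) (neg_s_sq hs)) k).trace
      = if k = 1 then 16 else 0 := by
  have hs' : (-s) ^ 2 = -2 := neg_s_sq hs
  obtain ⟨i, j⟩ := k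
  fin_cases i <;> fin_cases j <;>
    · simp (config := { decide := true }) only [scalarRep_apply, rep5, repS, homOf_apply,
        ZMod.val, pow_zero, mul_one, one_mul,
        Aq_one, Aq_sq s hs, Aq_cube s hs, Aq_four' s hs, Aq_five' s hs, Aq_six' s hs,
        Aq_seven' s hs,
        Aq_one (-s), Aq_sq (-s) hs', Aq_cube (-s) hs', Aq_four' (-s) hs', Aq_five' (-s) hs',
        Aq_six' (-s) hs', Aq_seven' (-s) hs', Xq_one, Xq_one (-s),
        A5_one, A5_sq', A5_cube', A5_four', A5_five', A5_six', A5_seven', X5_one,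
        Matrix.mul_fin_two, Matrix.one_fin_two, Matrix.trace_fin_two_of, QD.mk.injEq]
      all_goals norm_num
      all_goals first
      | ring1
      | linear_combination 2 * hs
      | linear_combination (-2) * hs
      | linear_combination 4 * hs
      | linear_combination (-4) * hs
end RepDefs

section Big
variable {F : Type} [Field F]

/-- the full representation of `QD` on `F⁴ × M₂(F)³` -/
def bigRep (s : F) (hs : s ^ 2 = -2) :
    QD →* (F × F × F × F × Matrix (Fin 2) (Fin 2) F × Matrix (Fin 2) (Fin 2) F ×
      Matrix (Fin 2) (Fin 2) F) :=
  (scalarRep 1 1 one_sq' one_sq').prod <|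
    (scalarRep 1 (-1) one_sq' neg_one_sq').prod <|
      (scalarRep (-1) 1 neg_one_sq' one_sq').prod <|
        (scalarRep (-1) (-1) neg_one_sq' neg_one_sq').prod <|
          rep5.prod <| (repS s hs).prod (repS (-s) (neg_s_sq hs))

/-- the Fourier coefficient functional -/
def tau (s : F) (hs : s ^ 2 = -2) (g : QD)
    (t : F × F × F × F × Matrix (Fin 2) (Fin 2) F × Matrix (Fin 2) (Fin 2) F ×
      Matrix (Fin 2) (Fin 2) F) : F :=
  scalarRep 1 1 one_sq' one_sq' g⁻¹ * t.1
    + scalarRep 1 (-1) one_sq' neg_one_sq' g⁻¹ * t.2.1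
    + scalarRep (-1) 1 neg_one_sq' one_sq' g⁻¹ * t.2.2.1
    + scalarRep (-1) (-1) neg_one_sq' neg_one_sq' g⁻¹ * t.2.2.2.1
    + 2 * (rep5 g⁻¹ * t.2.2.2.2.1).trace
    + 2 * (repS s hs g⁻¹ * t.2.2.2.2.2.1).trace
    + 2 * (repS (-s) (neg_s_sq hs) g⁻¹ * t.2.2.2.2.2.2).trace

theorem tau_add (s : F) (hs : s ^ 2 = -2) (g : QD) (t u) :
    tau s hs g (t + u) = tau s hs g t + tau s hs g u := by
  simp only [tau, Prod.fst_add, Prod.snd_add, mul_add, Matrix.mul_add, Matrix.trace_add]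
  ring

theorem tau_smul (s : F) (hs : s ^ 2 = -2) (g : QD) (c : F) (t) :
    tau s hs g (c • t) = c * tau s hs g t := by
  simp only [tau, Prod.smul_fst, Prod.smul_snd, Matrix.mul_smul, Matrix.trace_smul, smul_eq_mul]
  ring

theorem tau_rep (s : F) (hs : s ^ 2 = -2) (g h : QD) :
    tau s hs g (bigRep s hs h) = if h = g then 16 else 0 := by
  have : tau s hs g (bigRep s hs h)
      = scalarRep 1 1 one_sq' one_sq' (g⁻¹ * h) + scalarRep 1 (-1) one_sq' neg_one_sq' (g⁻¹ * h)
      + scalarRep (-1) 1 neg_one_sq' one_sq' (g⁻¹ * h)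
      + scalarRep (-1) (-1) neg_one_sq' neg_one_sq' (g⁻¹ * h)
      + 2 * (rep5 (g⁻¹ * h)).trace + 2 * ((repS s hs) (g⁻¹ * h)).trace
      + 2 * ((repS (-s) (neg_s_sq hs)) (g⁻¹ * h)).trace := by
    simp only [tau, bigRep, MonoidHom.prod_apply, map_mul]
  rw [this, orth s hs (g⁻¹ * h)]
  have : g⁻¹ * h = 1 ↔ h = g := by rw [inv_mul_eq_one, eq_comm]
  by_cases hgh : h = g
  · rw [if_pos (this.mpr hgh), if_pos hgh]
  · rw [if_neg (fun c => hgh (this.mp c)), if_neg hgh]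

/-- the algebra map from the group algebra -/
noncomputable def psi (s : F) (hs : s ^ 2 = -2) :
    MonoidAlgebra F QD →ₐ[F]
      (F × F × F × F × Matrix (Fin 2) (Fin 2) F × Matrix (Fin 2) (Fin 2) F ×
        Matrix (Fin 2) (Fin 2) F) :=
  MonoidAlgebra.lift F _ QD (bigRep s hs)

theorem tau_psi (s : F) (hs : s ^ 2 = -2) (x : MonoidAlgebra F QD) (g : QD) :
    tau s hs g (psi s hs x) = 16 * x.coeff g := by
  induction x using MonoidAlgebra.induction with
  | zero =>
      simp only [map_zero, Finsupp.zero_apply, mul_zero]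
      simp [tau]
  | single_add h c f hh hc ih =>
      rw [map_add, tau_add, ih]
      have hsingle : psi s hs (MonoidAlgebra.single h c) = c • bigRep s hs h := by
        simp [psi, MonoidAlgebra.lift_single]
      rw [hsingle, tau_smul, tau_rep, MonoidAlgebra.coeff_add, Finsupp.add_apply, MonoidAlgebra.coeff_single_apply]
      by_cases hgh : h = g
      · rw [if_pos hgh, if_pos hgh]; ring
      · rw [if_neg hgh, if_neg hgh]; ring

theorem psi_injective (s : F) (hs : s ^ 2 = -2) (h16 : (16 : F) ≠ 0) :
    Function.Injective (psi s hs) := by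
  intro x y hxy
  apply MonoidAlgebra.ext; apply Finsupp.ext
  intro g
  have h1 := tau_psi s hs x g
  have h2 := tau_psi s hs y g
  rw [hxy, h2] at h1
  exact mul_left_cancel₀ h16 h1.symm

theorem psi_bijective (s : F) (hs : s ^ 2 = -2) (h16 : (16 : F) ≠ 0) :
    Function.Bijective (psi s hs) := by
  refine ⟨psi_injective s hs h16, ?_⟩
  letI : Module.Finite F (MonoidAlgebra F QD) :=
    Module.Finite.equiv (MonoidAlgebra.coeffLinearEquiv F (S := F) (M := QD)).symm
  have hdim : Module.finrank F (MonoidAlgebra F QD)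
      = Module.finrank F (F × F × F × F × Matrix (Fin 2) (Fin 2) F ×
          Matrix (Fin 2) (Fin 2) F × Matrix (Fin 2) (Fin 2) F) := by
    have h1 : Module.finrank F (MonoidAlgebra F QD) = Fintype.card QD :=
      (MonoidAlgebra.coeffLinearEquiv F (S := F) (M := QD)).finrank_eq.trans (Module.finrank_finsupp_self F)
    rw [h1, card_QD]
    simp only [Module.finrank_prod, Module.finrank_matrix, Module.finrank_self,
      Fintype.card_fin]
  have hsurj := (LinearMap.injective_iff_surjective_of_finrank_eq_finrank
    (f := (psi s hs).toLinearMap) hdim).mp (psi_injective s hs h16)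
  exact hsurj

end Big

end QDAux
theorem unitGroup_QD16_one_three (F : Type) [Field F] [Fintype F]
    (p n : ℕ) [Fact p.Prime] (hp : Odd p) [CharP F p]
    (hn : 0 < n) (hq : Fintype.card F = p ^ n)
    (h8 : Fintype.card F % 8 = 1 ∨ Fintype.card F % 8 = 3) :
    Nonempty ((MonoidAlgebra F QD16)ˣ ≃*
      (Multiplicative (ZMod (Fintype.card F - 1)) ×
       Multiplicative (ZMod (Fintype.card F - 1)) ×
       Multiplicative (ZMod (Fintype.card F - 1)) ×
       Multiplicative (ZMod (Fintype.card F - 1)) ×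
       Matrix.GeneralLinearGroup (Fin 2) F ×
       Matrix.GeneralLinearGroup (Fin 2) F ×
       Matrix.GeneralLinearGroup (Fin 2) F)) := by
  classical
  have hpprime : p.Prime := Fact.out
  have hp2 : p ≠ 2 := by
    rcases hp with ⟨k, hk⟩; omega
  have h2 : (2 : F) ≠ 0 := by
    intro h0
    have h := (CharP.cast_eq_zero_iff F p 2).mp (by exact_mod_cast h0)
    exact hp2 ((Nat.prime_dvd_prime_iff_eq hpprime Nat.prime_two).mp h)
  have h16 : (16 : F) ≠ 0 := by
    have h : (16 : F) = 2 ^ 4 := by norm_num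
    rw [h]; exact pow_ne_zero _ h2
  have hsq : IsSquare (-2 : F) := FiniteField.isSquare_neg_two_iff.mpr ⟨by omega, by omega⟩
  obtain ⟨r, hr⟩ := hsq
  have hs : r ^ 2 = -2 := by rw [pow_two]; exact hr.symm
  -- the algebra isomorphism
  let E : MonoidAlgebra F QD16 ≃ₐ[F]
      (F × F × F × F × Matrix (Fin 2) (Fin 2) F × Matrix (Fin 2) (Fin 2) F ×
        Matrix (Fin 2) (Fin 2) F) :=
    (MonoidAlgebra.domCongr F F QDAux.eQD).trans
      (AlgEquiv.ofBijective (QDAux.psi r hs) (QDAux.psi_bijective r hs h16))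
  have hcardF : 3 ≤ Fintype.card F := by
    have hp3 : 3 ≤ p := by
      have := hpprime.two_le; omega
    have : p ≤ p ^ n := Nat.le_self_pow hn.ne' p
    omega
  haveI : NeZero (Fintype.card F - 1) := ⟨by omega⟩
  -- units of the field
  have uF : Fˣ ≃* Multiplicative (ZMod (Fintype.card F - 1)) := by
    apply mulEquivOfCyclicCardEq
    rw [Nat.card_eq_fintype_card, Fintype.card_units, Nat.card_eq_fintype_card,
      Fintype.card_multiplicative, ZMod.card]
  have glE : (Matrix (Fin 2) (Fin 2) F)ˣ ≃* Matrix.GeneralLinearGroup (Fin 2) F :=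
    MulEquiv.refl _
  refine ⟨(Units.mapEquiv E.toMulEquiv).trans ?_⟩
  exact MulEquiv.prodUnits.trans <| uF.prodCongr <|
    MulEquiv.prodUnits.trans <| uF.prodCongr <|
      MulEquiv.prodUnits.trans <| uF.prodCongr <|
        MulEquiv.prodUnits.trans <| uF.prodCongr <|
          MulEquiv.prodUnits.trans <| glE.prodCongr <|
            MulEquiv.prodUnits.trans <| glE.prodCongr glE
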